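/- Let a, b, σ be real numbers with b − 1 ≤ a < b and 0 < σ < 1 − a + b, and define h : ℝ → ℝ by h(ξ) = (a − b)ξ + σ·tanh ξ. Then |h(ξ)| < |ξ| for all ξ ≠ 0; in particular, the origin is the unique fixed point of h. -/

import Mathlib

lemma sinh_le_mul_cosh (x : ℝ) (hx : 0 ≤ x) : Real.sinh x ≤ x * Real.cosh x := by
  have hd : ∀ y : ℝ, HasDerivAt (fun t => t * Real.cosh t - Real.sinh t)
      (y * Real.sinh y) y := by
    intro y
    have h1 : HasDerivAt (fun t : ℝ => t * Real.cosh t)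
        (1 * Real.cosh y + y * Real.sinh y) y :=
      (hasDerivAt_id y).mul (Real.hasDerivAt_cosh y)
    have h2 := h1.sub (Real.hasDerivAt_sinh y)
    exact h2.congr_deriv (by ring)
  have hmono : MonotoneOn (fun t => t * Real.cosh t - Real.sinh t) (Set.Ici (0:ℝ)) := by
    apply monotoneOn_of_deriv_nonneg (convex_Ici 0)
    · exact (Continuous.sub (continuous_id.mul Real.continuous_cosh)
        Real.continuous_sinh).continuousOn
    · intro y hy
      exact ((hd y).differentiableAt).differentiableWithinAt
    · intro y hy
      rw [interior_Ici, Set.mem_Ioi] at hy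
      rw [(hd y).deriv]
      exact mul_nonneg hy.le (Real.sinh_nonneg_iff.2 hy.le)
  have := hmono (Set.self_mem_Ici) (Set.mem_Ici.2 hx) hx
  simpa using this

lemma tanh_le_self (x : ℝ) (hx : 0 ≤ x) : Real.tanh x ≤ x := by
  rw [Real.tanh_eq_sinh_div_cosh, div_le_iff₀ (Real.cosh_pos x)]
  exact sinh_le_mul_cosh x hx

lemma tanh_nonneg' (x : ℝ) (hx : 0 ≤ x) : 0 ≤ Real.tanh x := by
  rw [Real.tanh_eq_sinh_div_cosh]
  exact div_nonneg (Real.sinh_nonneg_iff.2 hx) (Real.cosh_pos x).le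

lemma tanh_pos' (x : ℝ) (hx : 0 < x) : 0 < Real.tanh x := by
  rw [Real.tanh_eq_sinh_div_cosh]
  exact div_pos (Real.sinh_pos_iff.2 hx) (Real.cosh_pos x)

lemma key (a b σ : ℝ) (hba : b - 1 ≤ a) (hab : a < b) (hσ0 : 0 < σ)
    (hσ : σ < 1 - a + b) (ξ : ℝ) (hξ : 0 < ξ) :
    |(a - b) * ξ + σ * Real.tanh ξ| < |ξ| := by
  have ht0 : 0 < Real.tanh ξ := tanh_pos' ξ hξ
  have ht1 : Real.tanh ξ ≤ ξ := tanh_le_self ξ hξ.le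
  rw [abs_of_pos hξ, abs_lt]
  constructor
  · nlinarith
  · nlinarith

theorem tanh_map_norm_decreasing
    (a b σ : ℝ) (hba : b - 1 ≤ a) (hab : a < b) (hσ0 : 0 < σ) (hσ : σ < 1 - a + b) :
    (∀ ξ : ℝ, ξ ≠ 0 → |(a - b) * ξ + σ * Real.tanh ξ| < |ξ|) ∧
    (∀ ξ : ℝ, (a - b) * ξ + σ * Real.tanh ξ = ξ → ξ = 0) := by
  have main : ∀ ξ : ℝ, ξ ≠ 0 → |(a - b) * ξ + σ * Real.tanh ξ| < |ξ| := by
    intro ξ hξ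
    rcases lt_or_gt_of_ne hξ with h | h
    · have := key a b σ hba hab hσ0 hσ (-ξ) (by linarith)
      rw [Real.tanh_neg] at this
      rw [← abs_neg ξ, ← abs_neg ((a - b) * ξ + σ * Real.tanh ξ)]
      convert this using 2
      ring
    · exact key a b σ hba hab hσ0 hσ ξ h
  refine ⟨main, fun ξ hfix => ?_⟩
  by_contra h
  have := main ξ h
  rw [hfix] at this
  exact lt_irrefl _ this
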